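/- Let (𝒳, 𝒜) be a measurable space, P a probability measure on 𝒳, and X₁, X₂, … an i.i.d. sequence of 𝒳-valued random variables with law P, defined on a probability space (Ω, 𝔽, ℙ). Let F be a family of measurable functions f : 𝒳 → ℝ. Assume that for every ε > 0 there exists a finite collection of pairs of P-integrable measurable functions (ℓ_j, u_j), j = 1,…,M(ε), with ℓ_j ≤ u_j pointwise and ∫ (u_j − ℓ_j) dP ≤ ε, such that every f ∈ F satisfies ℓ_j ≤ f ≤ u_j pointwise for some j (i.e. the L¹(P)-bracketing numbers of F are finite). For ω ∈ Ω and n ≥ 1, let Pₙ = Pₙ(ω) be the empirical measure (1/n)∑_{i=1}^n δ_{X_i(ω)}, and let N(ε, F, L¹(Pₙ)) denote the smallest cardinality k of a set of functions f₁,…,f_k : 𝒳 → ℝ such that every f ∈ F satisfies (1/n)∑_{i=1}^n |f(X_i) − f_m(X_i)| ≤ ε for some m ≤ k (with N = ∞ if no finite such set exists). Then for every ε > 0, (1/n) · log N(ε, F, L¹(Pₙ)) → 0 in ℙ-probability as n → ∞; that is, for every ε > 0 and δ > 0, ℙ( log N(ε, F, L¹(Pₙ)) ≥ δ n ) → 0.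 -/

import Mathlib

open MeasureTheory Filter
open scoped ENNReal BigOperators

/-- Lemma 2 of the paper: if the `L¹(P)`-bracketing numbers of a
class `F` of measurable functions are all finite, then for every `ε > 0` the
empirical `L¹(Pₙ)` metric entropy of `F` is `o_P(n)`: for every `δ > 0`, the
probability that every empirical `ε`-net of `F` (in the `L¹(Pₙ)` seminorm of the
first `n` i.i.d. observations) has cardinality `k` with `log k ≥ δ n` tends to `0`.
(The displayed event is exactly `{log N(ε, F, L¹(Pₙ)) ≥ δ n}`, with the convention
that it holds when no finite net exists.) -/
theorem empirical_entropy_small {𝒳 Ω : Type*} [MeasurableSpace 𝒳] [MeasurableSpace Ω]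
    (μ : Measure Ω) [IsProbabilityMeasure μ]
    (P : Measure 𝒳) [IsProbabilityMeasure P]
    (X : ℕ → Ω → 𝒳) (hXm : ∀ i, Measurable (X i))
    (hiid : ProbabilityTheory.iIndepFun X μ)
    (hlaw : ∀ i, μ.map (X i) = P)
    (F : Set (𝒳 → ℝ)) (hFm : ∀ f ∈ F, Measurable f)
    (hbracket : ∀ ε : ℝ, 0 < ε → ∃ (M : ℕ) (l u : Fin M → 𝒳 → ℝ),
        (∀ j, Measurable (l j) ∧ Measurable (u j)
          ∧ Integrable (l j) P ∧ Integrable (u j) P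
          ∧ (∀ x, l j x ≤ u j x) ∧ (∫ x, (u j x - l j x) ∂P) ≤ ε)
        ∧ ∀ f ∈ F, ∃ j, ∀ x, l j x ≤ f x ∧ f x ≤ u j x)
    (ε δ : ℝ) (hε : 0 < ε) (hδ : 0 < δ) :
    Tendsto
      (fun n : ℕ => μ {ω : Ω | ∀ k : ℕ,
          (∃ fs : Fin k → 𝒳 → ℝ, ∀ f ∈ F, ∃ m : Fin k,
              (1 / (n : ℝ)) * ∑ i : Fin n, |f (X i ω) - fs m (X i ω)| ≤ ε)
          → δ * (n : ℝ) ≤ Real.log (k : ℝ)})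
      atTop (nhds 0) := by
  obtain ⟨M, l, u, hju, hcover⟩ := hbracket (ε / 2) (by linarith)
  set g : Fin M → 𝒳 → ℝ := fun j x => u j x - l j x with hgdef
  have hgm : ∀ j, Measurable (g j) := fun j => (hju j).2.1.sub (hju j).1
  have hgnonneg : ∀ j x, 0 ≤ g j x := fun j x => sub_nonneg.2 ((hju j).2.2.2.2.1 x)
  have hgint : ∀ j, ∫ x, g j x ∂P ≤ ε / 2 := fun j => (hju j).2.2.2.2.2
  -- the "bad" sets
  set C : ℕ → Set Ω :=
    fun n => {ω | ∃ j : Fin M, ε < (∑ i ∈ Finset.range n, g j (X i ω)) / n} with hCdef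
  have hCm : ∀ n, MeasurableSet (C n) := by
    intro n
    have : C n = ⋃ j : Fin M,
        {ω | ε < (∑ i ∈ Finset.range n, g j (X i ω)) / n} := by
      ext ω; simp [hCdef]
    rw [this]
    refine MeasurableSet.iUnion fun j => ?_
    exact measurableSet_lt measurable_const
      ((Finset.measurable_sum _ fun i _ => (hgm j).comp (hXm i)).div_const _)
  -- strong law of large numbers for each bracket difference
  have hXid : ∀ i, ProbabilityTheory.IdentDistrib (X i) (X 0) μ μ :=
    fun i => ⟨(hXm i).aemeasurable, (hXm 0).aemeasurable, by rw [hlaw i, hlaw 0]⟩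
  have hSLLN : ∀ j : Fin M, ∀ᵐ ω ∂μ,
      Tendsto (fun n : ℕ => (∑ i ∈ Finset.range n, g j (X i ω)) / n) atTop
        (nhds (∫ x, g j x ∂P)) := by
    intro j
    have hint : Integrable (fun ω => g j (X 0 ω)) μ := by
      have : Integrable (g j) (μ.map (X 0)) := by rw [hlaw 0]; exact (hju j).2.2.2.1.sub (hju j).2.2.1
      exact (integrable_map_measure (hgm j).aestronglyMeasurable (hXm 0).aemeasurable).1 this
    have hEq : (∫ ω, g j (X 0 ω) ∂μ) = ∫ x, g j x ∂P := by
      rw [← hlaw 0, integral_map (hXm 0).aemeasurable (hgm j).aestronglyMeasurable]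
    have := ProbabilityTheory.strong_law_ae_real (fun i ω => g j (X i ω)) hint
      (fun i k hik => ((hiid.indepFun hik).comp (hgm j) (hgm j)))
      (fun i => (hXid i).comp (hgm j))
    rw [hEq] at this
    exact this
  -- almost surely, eventually not in `C n`
  have hae : ∀ᵐ ω ∂μ, ∀ᶠ n : ℕ in atTop, ω ∉ C n := by
    have := (ae_all_iff).2 hSLLN
    filter_upwards [this] with ω hω
    have h1 : ∀ j : Fin M, ∀ᶠ n : ℕ in atTop,
        (∑ i ∈ Finset.range n, g j (X i ω)) / n < ε := by
      intro j
      exact (hω j).eventually_lt_const (lt_of_le_of_lt (hgint j) (by linarith))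
    have h2 : ∀ᶠ n : ℕ in atTop, ∀ j : Fin M,
        (∑ i ∈ Finset.range n, g j (X i ω)) / n < ε := eventually_all.2 h1
    filter_upwards [h2] with n hn
    rintro ⟨j, hj⟩
    exact absurd hj (not_lt.2 (hn j).le)
  -- the decreasing hulls
  set D : ℕ → Set Ω := fun n => ⋃ m : ℕ, C (n + m) with hDdef
  have hDanti : Antitone D := by
    intro a b hab
    intro ω hω
    simp only [hDdef, Set.mem_iUnion] at hω ⊢
    obtain ⟨m, hm⟩ := hω
    exact ⟨b - a + m, by rwa [show a + (b - a + m) = b + m by omega]⟩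
  have hDnull : μ (⋂ n, D n) = 0 := by
    refine measure_mono_null ?_ (ae_iff.1 hae)
    intro ω hω
    simp only [Set.mem_iInter, hDdef, Set.mem_iUnion] at hω
    simp only [Set.mem_setOf_eq, eventually_atTop, not_exists, not_forall]
    intro N
    obtain ⟨m, hm⟩ := hω N
    exact ⟨N + m, by omega, by simpa using hm⟩
  have hDtend : Tendsto (fun n => μ (D n)) atTop (nhds 0) := by
    have := tendsto_measure_iInter_atTop
      (μ := μ) (s := D)
      (fun n => (MeasurableSet.iUnion fun m => hCm (n + m)).nullMeasurableSet)
      hDanti ⟨0, measure_ne_top μ _⟩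
    rwa [hDnull] at this
  -- the event is eventually contained in `C n ⊆ D n`
  set N₀ : ℕ := ⌈Real.log M / δ⌉₊ + 1 with hN₀
  have hsub : ∀ n : ℕ, N₀ ≤ n →
      {ω : Ω | ∀ k : ℕ,
          (∃ fs : Fin k → 𝒳 → ℝ, ∀ f ∈ F, ∃ m : Fin k,
              (1 / (n : ℝ)) * ∑ i : Fin n, |f (X i ω) - fs m (X i ω)| ≤ ε)
          → δ * (n : ℝ) ≤ Real.log (k : ℝ)} ⊆ C n := by
    intro n hn ω hω
    by_contra hC
    simp only [hCdef, Set.mem_setOf_eq, not_exists, not_lt] at hC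
    have hnet : ∃ fs : Fin M → 𝒳 → ℝ, ∀ f ∈ F, ∃ m : Fin M,
        (1 / (n : ℝ)) * ∑ i : Fin n, |f (X i ω) - fs m (X i ω)| ≤ ε := by
      refine ⟨l, fun f hf => ?_⟩
      obtain ⟨j, hj⟩ := hcover f hf
      refine ⟨j, ?_⟩
      have hle : ∑ i : Fin n, |f (X i ω) - l j (X i ω)|
          ≤ ∑ i ∈ Finset.range n, g j (X i ω) := by
        rw [← Fin.sum_univ_eq_sum_range (fun i => g j (X i ω))]
        refine Finset.sum_le_sum fun i _ => ?_
        rw [abs_of_nonneg (sub_nonneg.2 (hj (X i ω)).1)]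
        exact sub_le_sub_right (hj (X i ω)).2 _
      have hn0 : (0 : ℝ) < n := by
        have : 1 ≤ n := le_trans (by omega) hn
        exact_mod_cast this
      calc (1 / (n : ℝ)) * ∑ i : Fin n, |f (X i ω) - l j (X i ω)|
          ≤ (1 / (n : ℝ)) * ∑ i ∈ Finset.range n, g j (X i ω) := by
            exact mul_le_mul_of_nonneg_left hle (by positivity)
        _ = (∑ i ∈ Finset.range n, g j (X i ω)) / n := by ring
        _ ≤ ε := hC j
    have hlog := hω M hnet
    -- but `δ n > log M` since `n ≥ N₀ > log M / δ`
    have h1 : Real.log M / δ < (N₀ : ℝ) := by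
      have := Nat.le_ceil (Real.log M / δ)
      have h2 : ((⌈Real.log M / δ⌉₊ : ℝ)) < N₀ := by
        rw [hN₀]; push_cast; linarith
      linarith
    have h3 : Real.log M / δ < (n : ℝ) := lt_of_lt_of_le h1 (by exact_mod_cast hn)
    have h4 : Real.log M < δ * n := by
      rw [div_lt_iff₀ hδ] at h3; linarith
    linarith
  -- squeeze
  refine tendsto_of_tendsto_of_tendsto_of_le_of_le' tendsto_const_nhds hDtend
    (Eventually.of_forall fun n => zero_le (a := _)) ?_
  filter_upwards [eventually_ge_atTop N₀] with n hn
  refine measure_mono ((hsub n hn).trans ?_)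
  intro ω hω
  simp only [hDdef, Set.mem_iUnion]
  exact ⟨0, by simpa using hω⟩
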